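/- Chain-amplified collapse and gain for constant Fisher information (Supplementary Result S3): Let F₀ > 0 and let F : ℝ → ℝ satisfy F(θ) = F₀ for all θ > 0. Let K ≥ 2 be a natural number and let θ₁, …, θ_K be strictly positive reals with total θ_ab = ∑_{j=1}^K θ_j. Then: (i) the K-step violation statistic V_K = F(θ_ab)⁻¹ − ∑_{j=1}^K F(θ_j)⁻¹ equals −(K−1)/F₀ and is strictly negative; (ii) the K-step classical benchmark F_cl^{(K)} = (∑_{j=1}^K F(θ_j)⁻¹)⁻¹ equals F₀/K; and (iii) the gain ratio Γ_K = F(θ_ab) / F_cl^{(K)} equals K. -/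

import Mathlib

/-- Chain-amplified collapse and gain for constant Fisher information
(Supplementary Result S3): for a readout with constant Fisher information `F₀`,
every `K`-step causal-path decomposition yields `V_K = −(K−1)/F₀ < 0`, the
classical benchmark `F₀/K`, and gain ratio exactly `K`. -/
theorem chain_amplified_gain
    (F₀ : ℝ) (hF₀ : 0 < F₀)
    (F : ℝ → ℝ) (hF : ∀ θ : ℝ, 0 < θ → F θ = F₀)
    (K : ℕ) (hK : 2 ≤ K)
    (θ : Fin K → ℝ) (hθ : ∀ j, 0 < θ j)
    (θab : ℝ) (hθab : θab = ∑ j, θ j) :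
    ((F θab)⁻¹ - ∑ j, (F (θ j))⁻¹ = -((K : ℝ) - 1) / F₀ ∧
      (F θab)⁻¹ - ∑ j, (F (θ j))⁻¹ < 0) ∧
    (∑ j, (F (θ j))⁻¹)⁻¹ = F₀ / K ∧
    F θab / (∑ j, (F (θ j))⁻¹)⁻¹ = K := by
  have hKpos : (0:ℕ) < K := by omega
  have hθabpos : 0 < θab := by
    rw [hθab]
    exact Finset.sum_pos (fun j _ => hθ j) (by simp [Finset.univ_nonempty_iff, Fin.pos_iff_nonempty.mp hKpos])
  have hFab : F θab = F₀ := hF θab hθabpos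
  have hsum : (∑ j, (F (θ j))⁻¹) = (K : ℝ) / F₀ := by
    have : ∀ j : Fin K, (F (θ j))⁻¹ = F₀⁻¹ := fun j => by rw [hF _ (hθ j)]
    simp [this, Finset.sum_const, div_eq_mul_inv]
  have hK1 : (1:ℝ) ≤ (K:ℝ) := by exact_mod_cast Nat.one_le_of_lt hK
  have hKR : (0:ℝ) < (K:ℝ) := by positivity
  refine ⟨⟨?_, ?_⟩, ?_, ?_⟩
  · rw [hFab, hsum]; field_simp; ring
  · rw [hFab, hsum]
    have h2 : (2:ℝ) ≤ (K:ℝ) := by exact_mod_cast hK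
    have hi : 0 < F₀⁻¹ := by positivity
    rw [div_eq_mul_inv]
    nlinarith
  · rw [hsum]; field_simp
  · rw [hFab, hsum]; field_simp
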